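/- For every natural number n and every 0 ≤ i ≤ n, the following identity holds in the ring of formal power series ℂ[[u]]: (1 − a r^{−i} s^{i−n} u)(1 − a r^{1−i} s^{i−n−1} u) · ( r^{n−i} s^{i} + Σ_{k≥1} (r − s) ( (a r^{−i} s^{i−n})^k [i+1][n−i] − (a r^{1−i} s^{i−n−1})^k [i][n+1−i] ) u^k ) = r^{n−i} s^{i} (1 − a r s^{−n−1} u)(1 − a r^{−n} u). -/

import Mathlib

open PowerSeries

/-- The two-parameter quantum integer `[m] = (r^m - s^m)/(r - s)`. -/
noncomputable def qint (r s : ℂ) (m : ℕ) : ℂ := (r ^ m - s ^ m) / (r - s)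

lemma aux_ps (α β γ δ c : ℂ) (f : ℕ → ℂ)
    (h0 : f 0 = c)
    (h1 : f 1 - (α+β) * f 0 = -(c*(γ+δ)))
    (h2 : f 2 - (α+β) * f 1 + α*β * f 0 = c*(γ*δ))
    (h3 : ∀ k, f (k+3) - (α+β) * f (k+2) + α*β * f (k+1) = 0) :
    (1 - C α * X) * (1 - C β * X) * mk f
      = C c * ((1 - C γ * X) * (1 - C δ * X)) := by
  have hx0 : ∀ φ : ℂ⟦X⟧, coeff 0 (X * φ) = 0 := by
    intro φ; simp [coeff_zero_eq_constantCoeff]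
  have hL : (1 - C α * X) * (1 - C β * X) * mk f
      = mk f - (C α * (X * mk f) + C β * (X * mk f))
          + C (α*β) * (X * (X * mk f)) := by
    simp only [map_mul]; ring
  have hR : C c * ((1 - C γ * X) * (1 - C δ * X))
      = C c - (C (c*γ) * X + C (c*δ) * X) + C (c*(γ*δ)) * (X * X) := by
    simp only [map_mul]; ring
  rw [hL, hR]
  ext k
  rcases k with _ | _ | _ | k <;>
      simp only [map_sub, map_add, coeff_C_mul, coeff_succ_X_mul, coeff_mk, coeff_C, coeff_X,
        hx0, if_true, if_false, mul_zero, sub_zero, add_zero, zero_add] <;>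
    norm_num
  · exact h0
  · linear_combination h1
  · linear_combination h2
  · rw [if_neg (by omega : ¬ k + 2 = 1)]; linear_combination h3 k

lemma key1 (r s a x y u v d : ℂ) (hr : r ≠ 0) (hs : s ≠ 0) (hx : x ≠ 0) (hy : y ≠ 0)
    (hu : u ≠ 0) (hv : v ≠ 0) (hd0 : d ≠ 0) (hd : d = r - s) :
    d * ((a * x⁻¹ * y⁻¹) * ((r*x - s*v)/d) * ((u - y)/d)
        - (a * r * x⁻¹ * (y⁻¹ * s⁻¹)) * ((x - v)/d) * ((r*u - s*y)/d))
      - ((a * x⁻¹ * y⁻¹) + (a * r * x⁻¹ * (y⁻¹ * s⁻¹))) * (u * v)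
    = -((u*v) * ((a * r * ((v*y)⁻¹ * s⁻¹)) + (a * (x*u)⁻¹))) := by
  subst hd
  have hxi := mul_inv_cancel₀ hx
  have hyi := mul_inv_cancel₀ hy
  have hui := mul_inv_cancel₀ hu
  have hvi := mul_inv_cancel₀ hv
  have hsi := mul_inv_cancel₀ hs
  have hdi := mul_inv_cancel₀ hd0
  linear_combination (a*u*y⁻¹ - a*y*y⁻¹ + s*a*u*y⁻¹*(r-s)⁻¹ - s*a*u*y⁻¹*s⁻¹ - s*a*y*y⁻¹*(r-s)⁻¹ + s*a*y*y⁻¹*s⁻¹ - s^2*a*u*y⁻¹*s⁻¹*(r-s)⁻¹ + s^2*a*y*y⁻¹*s⁻¹*(r-s)⁻¹ - r*a*u*y⁻¹*s⁻¹) * hxi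
      + (-a - s*a*(r-s)⁻¹ + s*a*s⁻¹ + s*a*v*x⁻¹*(r-s)⁻¹ - s*a*v*x⁻¹*s⁻¹ + s^2*a*s⁻¹*(r-s)⁻¹ - s^2*a*v*x⁻¹*s⁻¹*(r-s)⁻¹) * hyi
      + (a*v*x⁻¹) * hui
      + (r*a*u*y⁻¹*s⁻¹) * hvi
      + (a - a*v*x⁻¹ - a*u*y⁻¹ + a*u*v*x⁻¹*y⁻¹ + s*a*(r-s)⁻¹ - s*a*v*x⁻¹*(r-s)⁻¹ - s*a*u*y⁻¹*(r-s)⁻¹ + s*a*u*v*x⁻¹*y⁻¹*(r-s)⁻¹) * hsi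
      + (a*x*u*x⁻¹*y⁻¹ - a*x*y*x⁻¹*y⁻¹ - s*a*u*v*x⁻¹*y⁻¹*(r-s)⁻¹ + s*a*u*v*x⁻¹*y⁻¹*s⁻¹ + s*a*y*v*x⁻¹*y⁻¹*(r-s)⁻¹ - s*a*y*v*x⁻¹*y⁻¹*s⁻¹ - s*a*x*u*x⁻¹*y⁻¹*s⁻¹ + s*a*x*y*x⁻¹*y⁻¹*s⁻¹ + r*a*u*v*x⁻¹*y⁻¹*s⁻¹ + r*a*x*u*x⁻¹*y⁻¹*(r-s)⁻¹ - r*a*x*u*x⁻¹*y⁻¹*s⁻¹ - r*a*x*y*x⁻¹*y⁻¹*(r-s)⁻¹ - r*s*a*y*v*x⁻¹*y⁻¹*s⁻¹*(r-s)⁻¹ + r*s*a*x*y*x⁻¹*y⁻¹*s⁻¹*(r-s)⁻¹ + r^2*a*u*v*x⁻¹*y⁻¹*s⁻¹*(r-s)⁻¹ - r^2*a*x*u*x⁻¹*y⁻¹*s⁻¹*(r-s)⁻¹) * hdi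

lemma key2 (r s a x y u v d : ℂ) (hr : r ≠ 0) (hs : s ≠ 0) (hx : x ≠ 0) (hy : y ≠ 0)
    (hu : u ≠ 0) (hv : v ≠ 0) (hd0 : d ≠ 0) (hd : d = r - s) :
    d * ((a * x⁻¹ * y⁻¹)^2 * ((r*x - s*v)/d) * ((u - y)/d)
        - (a * r * x⁻¹ * (y⁻¹ * s⁻¹))^2 * ((x - v)/d) * ((r*u - s*y)/d))
      - ((a * x⁻¹ * y⁻¹) + (a * r * x⁻¹ * (y⁻¹ * s⁻¹))) *
          (d * ((a * x⁻¹ * y⁻¹) * ((r*x - s*v)/d) * ((u - y)/d)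
            - (a * r * x⁻¹ * (y⁻¹ * s⁻¹)) * ((x - v)/d) * ((r*u - s*y)/d)))
      + (a * x⁻¹ * y⁻¹) * (a * r * x⁻¹ * (y⁻¹ * s⁻¹)) * (u * v)
    = (u*v) * ((a * r * ((v*y)⁻¹ * s⁻¹)) * (a * (x*u)⁻¹)) := by
  subst hd
  have hxi := mul_inv_cancel₀ hx
  have hyi := mul_inv_cancel₀ hy
  have hui := mul_inv_cancel₀ hu
  have hvi := mul_inv_cancel₀ hv
  have hsi := mul_inv_cancel₀ hs
  have hdi := mul_inv_cancel₀ hd0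
  linear_combination (r*a^2*y*x⁻¹*y⁻¹^2*s⁻¹) * hxi
      + (r*a^2*x⁻¹*y⁻¹*s⁻¹) * hyi
      + (-r*a^2*v*x⁻¹*y⁻¹*v⁻¹*s⁻¹) * hui
      + (-r*a^2*x⁻¹*y⁻¹*s⁻¹) * hvi
      + (-r*a^2*u*v*x⁻¹^2*y⁻¹^2*s⁻¹ + r*a^2*x*y*x⁻¹^2*y⁻¹^2*s⁻¹ + r*s*a^2*u*v*x⁻¹^2*y⁻¹^2*s⁻¹*(r-s)⁻¹ - r*s*a^2*x*y*x⁻¹^2*y⁻¹^2*s⁻¹*(r-s)⁻¹ - r^2*a^2*u*v*x⁻¹^2*y⁻¹^2*s⁻¹*(r-s)⁻¹ + r^2*a^2*x*y*x⁻¹^2*y⁻¹^2*s⁻¹*(r-s)⁻¹) * hdi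

theorem eigenvalue_generating_function (r s a : ℂ) (hr : r ≠ 0) (hs : s ≠ 0) (ha : a ≠ 0)
    (hrs : r ≠ s) (n i : ℕ) (hi : i ≤ n) :
    (1 - PowerSeries.C (a * r ^ (-(i : ℤ)) * s ^ ((i : ℤ) - (n : ℤ))) * PowerSeries.X)
      * (1 - PowerSeries.C (a * r ^ ((1 : ℤ) - (i : ℤ)) * s ^ ((i : ℤ) - (n : ℤ) - 1))
          * PowerSeries.X)
      * PowerSeries.mk (fun k =>
          if k = 0 then r ^ ((n : ℤ) - (i : ℤ)) * s ^ (i : ℕ)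
          else (r - s) *
            ((a * r ^ (-(i : ℤ)) * s ^ ((i : ℤ) - (n : ℤ))) ^ k
                * qint r s (i + 1) * qint r s (n - i)
              - (a * r ^ ((1 : ℤ) - (i : ℤ)) * s ^ ((i : ℤ) - (n : ℤ) - 1)) ^ k
                * qint r s i * qint r s (n + 1 - i)))
    = PowerSeries.C (r ^ ((n : ℤ) - (i : ℤ)) * s ^ (i : ℕ))
      * ((1 - PowerSeries.C (a * r * s ^ (-(n : ℤ) - 1)) * PowerSeries.X)
          * (1 - PowerSeries.C (a * r ^ (-(n : ℤ))) * PowerSeries.X)) := by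
  obtain ⟨j, rfl⟩ := Nat.exists_eq_add_of_le hi
  have hrs' : r - s ≠ 0 := sub_ne_zero.mpr hrs
  have hz : ∀ (w : ℂ), w ≠ 0 → ∀ (m : ℤ) (p q : ℕ), m = (p : ℤ) - (q : ℤ) →
      w ^ m = w ^ p * (w ^ q)⁻¹ := by
    intro w hw m p q hm
    rw [hm, zpow_sub₀ hw, zpow_natCast, zpow_natCast, div_eq_mul_inv]
  have hα : a * r ^ (-(i : ℤ)) * s ^ ((i : ℤ) - ((i + j : ℕ) : ℤ))
      = a * (r ^ i)⁻¹ * (s ^ j)⁻¹ := by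
    rw [hz r hr _ 0 i (by push_cast; ring), hz s hs _ 0 j (by push_cast; ring)]
    simp
  have hβ : a * r ^ ((1 : ℤ) - (i : ℤ)) * s ^ ((i : ℤ) - ((i + j : ℕ) : ℤ) - 1)
      = a * r * (r ^ i)⁻¹ * ((s ^ j)⁻¹ * s⁻¹) := by
    rw [hz r hr _ 1 i (by push_cast; ring), hz s hs _ 0 (j+1) (by push_cast; ring)]
    rw [pow_one, pow_zero, one_mul, pow_succ, mul_inv]
    ring
  have hγ : a * r * s ^ (-((i + j : ℕ) : ℤ) - 1)
      = a * r * ((s ^ i * s ^ j)⁻¹ * s⁻¹) := by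
    rw [hz s hs _ 0 (i + j + 1) (by push_cast; ring)]
    rw [pow_zero, one_mul, pow_succ, pow_add, mul_inv]
  have hδ : a * r ^ (-((i + j : ℕ) : ℤ)) = a * (r ^ i * r ^ j)⁻¹ := by
    rw [hz r hr _ 0 (i + j) (by push_cast; ring), pow_zero, one_mul, pow_add]
  have hc : r ^ (((i + j : ℕ) : ℤ) - (i : ℤ)) * s ^ i = r ^ j * s ^ i := by
    rw [hz r hr _ j 0 (by push_cast; ring), pow_zero, inv_one, mul_one]
  have hq1 : qint r s (i + 1) = (r * r ^ i - s * s ^ i) / (r - s) := by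
    rw [qint, pow_succ, pow_succ]; ring
  have hq2 : qint r s (i + j - i) = (r ^ j - s ^ j) / (r - s) := by
    rw [show i + j - i = j from by omega, qint]
  have hq3 : qint r s i = (r ^ i - s ^ i) / (r - s) := rfl
  have hq4 : qint r s (i + j + 1 - i) = (r * r ^ j - s * s ^ j) / (r - s) := by
    rw [show i + j + 1 - i = j + 1 from by omega, qint, pow_succ, pow_succ]; ring
  apply aux_ps
  · simp
  · simp only [one_ne_zero, OfNat.ofNat_ne_zero, ↓reduceIte, pow_one]
    rw [hα, hβ, hγ, hδ, hc, hq1, hq2, hq3, hq4]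
    linear_combination key1 r s a (r^i) (s^j) (r^j) (s^i) (r-s) hr hs (pow_ne_zero _ hr)
      (pow_ne_zero _ hs) (pow_ne_zero _ hr) (pow_ne_zero _ hs) hrs' rfl
  · simp only [one_ne_zero, OfNat.ofNat_ne_zero, ↓reduceIte, pow_one]
    rw [hα, hβ, hγ, hδ, hc, hq1, hq2, hq3, hq4]
    linear_combination key2 r s a (r^i) (s^j) (r^j) (s^i) (r-s) hr hs (pow_ne_zero _ hr)
      (pow_ne_zero _ hs) (pow_ne_zero _ hr) (pow_ne_zero _ hs) hrs' rfl
  · intro k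
    simp only [if_neg (by omega : ¬ k + 3 = 0),
      if_neg (by omega : ¬ k + 2 = 0), if_neg (by omega : ¬ k + 1 = 0)]
    ring
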